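/- Composing the four Lorentz-corrected transformations — space translation by l, Lorentz boost by v, space translation by l/γ, Lorentz boost by −v (with γ = 1/√(1−v²/c²)) — maps (x,t) to (x, t + lv/c²); i.e., the spatial coordinate returns to its original value while time picks up the offset lv/c². -/

import Mathlib

/-- Composing translation by `l`, Lorentz boost by `v`, translation by `l/γ`, and
Lorentz boost by `-v` maps `(x,t)` to `(x, t + l v / c²)`. -/
theorem stmt_4 (c v l : ℝ) (hc : 0 < c) (hv : |v| < c)
    (γ : ℝ) (hγ : γ = 1 / Real.sqrt (1 - v^2 / c^2))
    (T₁ T₂ T₃ T₄ : ℝ × ℝ → ℝ × ℝ)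
    (hT₁ : ∀ x t : ℝ, T₁ (x, t) = (x - l, t))
    (hT₂ : ∀ x t : ℝ, T₂ (x, t) = (γ * (x - v * t), γ * (t - (v / c^2) * x)))
    (hT₃ : ∀ x t : ℝ, T₃ (x, t) = (x + l / γ, t))
    (hT₄ : ∀ x t : ℝ, T₄ (x, t) = (γ * (x + v * t), γ * (t + (v / c^2) * x))) :
    ∀ x t : ℝ, (T₄ ∘ T₃ ∘ T₂ ∘ T₁) (x, t) = (x, t + l * v / c^2) := by
  intro x t
  have hvc : v^2 < c^2 := by
    have := sq_abs v
    nlinarith [abs_nonneg v]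
  have hpos : 0 < 1 - v^2 / c^2 := by
    have hc2 : 0 < c^2 := by positivity
    rw [sub_pos, div_lt_one hc2]; exact hvc
  have hsq : Real.sqrt (1 - v^2 / c^2) ^ 2 = 1 - v^2 / c^2 :=
    Real.sq_sqrt hpos.le
  have hsp : 0 < Real.sqrt (1 - v^2 / c^2) := Real.sqrt_pos.mpr hpos
  have hγpos : 0 < γ := by rw [hγ]; positivity
  have hne : ((c^2 - v^2) : ℝ) ≠ 0 := by nlinarith
  have hγ2 : γ^2 * (c^2 - v^2) = c^2 := by
    rw [hγ, div_pow, one_pow, hsq]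
    field_simp
  simp only [Function.comp_apply, hT₁, hT₂, hT₃, hT₄, Prod.mk.injEq]
  have hc2 : (c:ℝ)^2 ≠ 0 := by positivity
  have hγne : γ ≠ 0 := ne_of_gt hγpos
  constructor <;> field_simp
  · linear_combination (x-l) * hγ2
  · linear_combination t * hγ2
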